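/- Let α = min(i_1, …, i_m, j_1, …, j_n). For every 0 < ε < 1, every h ∈ SL_d(ℝ) with max_{k,ℓ} |h_{kℓ} − (I_d)_{kℓ}| < ((2^α − 1)/d) · ε^{max(m,n)}, and every g ∈ SL_d(ℝ) with δ_{i,j}(g) < ε/2, one has δ_{i,j}(h g) < ε. (Consequently, U_{i,j}(ε/2) is contained in the inner r-core σ_r(U_{i,j}(ε)) = {x : dist(x, U_{i,j}(ε)^c) > r} whenever r is small compared with ε^{max(m,n)}.) -/

import Mathlib

open Matrix

/-- The weighted quasinorm `‖x‖_w = max_k |x_k|^(1/w_k)`. -/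
noncomputable def wnorm {k : ℕ} (w : Fin k → ℝ) (x : Fin k → ℝ) : ℝ :=
  ⨆ l, |x l| ^ (1 / w l)

/-- The `(i,j)`-quasinorm of `v = (p, q) ∈ ℝ^m × ℝ^n`. -/
noncomputable def wnormIJ (m n : ℕ) (wi : Fin m → ℝ) (wj : Fin n → ℝ)
    (v : Fin m ⊕ Fin n → ℝ) : ℝ :=
  max ((wnorm wi (fun k => v (Sum.inl k))) ^ (1 / (m : ℝ)))
      ((wnorm wj (fun l => v (Sum.inr l))) ^ (1 / (n : ℝ)))

/-- `δ_{i,j}(g) = inf {‖g v‖_{i,j} : v ∈ ℤ^d, v ≠ 0}`. -/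
noncomputable def deltaIJ (m n : ℕ) (wi : Fin m → ℝ) (wj : Fin n → ℝ)
    (g : Matrix (Fin m ⊕ Fin n) (Fin m ⊕ Fin n) ℝ) : ℝ :=
  sInf {r | ∃ v : Fin m ⊕ Fin n → ℤ, v ≠ 0 ∧
    r = wnormIJ m n wi wj (g.mulVec (fun x => (v x : ℝ)))}

lemma wnorm_nonneg {k : ℕ} (hk : 0 < k) (w x : Fin k → ℝ) : 0 ≤ wnorm w x := by
  have : Nonempty (Fin k) := ⟨⟨0, hk⟩⟩
  rw [wnorm]
  exact le_ciSup_of_le (Set.Finite.bddAbove (Set.finite_range _)) (Classical.arbitrary _)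
    (Real.rpow_nonneg (abs_nonneg _) _)

lemma wnormIJ_nonneg (m n : ℕ) (hm : 0 < m) (wi : Fin m → ℝ) (wj : Fin n → ℝ)
    (v : Fin m ⊕ Fin n → ℝ) : 0 ≤ wnormIJ m n wi wj v :=
  le_max_of_le_left (Real.rpow_nonneg (wnorm_nonneg hm _ _) _)

lemma block_lt {k : ℕ} (hk : 0 < k) (w x : Fin k → ℝ) (hw : ∀ l, 0 < w l) (c : ℝ) (hc : 0 < c)
    (h : (wnorm w x) ^ (1 / (k : ℝ)) < c) : ∀ l, |x l| < c ^ ((k : ℝ) * w l) := by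
  intro l
  have : Nonempty (Fin k) := ⟨⟨0, hk⟩⟩
  have hx0 : 0 ≤ wnorm w x := wnorm_nonneg hk w x
  have hk' : (k : ℝ) ≠ 0 := Nat.cast_ne_zero.mpr hk.ne'
  have h1 : wnorm w x < c ^ (k : ℝ) := by
    have h2 := Real.rpow_lt_rpow (Real.rpow_nonneg hx0 _) h
      (by exact_mod_cast hk : (0 : ℝ) < (k : ℝ))
    rwa [← Real.rpow_mul hx0, one_div_mul_cancel hk', Real.rpow_one] at h2
  have h3 : |x l| ^ (1 / w l) ≤ wnorm w x := by
    rw [wnorm]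
    exact le_ciSup (f := fun l => |x l| ^ (1 / w l))
      (Set.Finite.bddAbove (Set.finite_range _)) l
  have h5 := Real.rpow_lt_rpow (Real.rpow_nonneg (abs_nonneg _) _)
    (lt_of_le_of_lt h3 h1) (hw l)
  rwa [← Real.rpow_mul (abs_nonneg _), one_div_mul_cancel (hw l).ne', Real.rpow_one,
    ← Real.rpow_mul hc.le] at h5

lemma block_gt {k : ℕ} (hk : 0 < k) (w x : Fin k → ℝ) (hw : ∀ l, 0 < w l) (c : ℝ) (hc : 0 < c)
    (h : ∀ l, |x l| < c ^ ((k : ℝ) * w l)) : (wnorm w x) ^ (1 / (k : ℝ)) < c := by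
  have : Nonempty (Fin k) := ⟨⟨0, hk⟩⟩
  have hk' : (k : ℝ) ≠ 0 := Nat.cast_ne_zero.mpr hk.ne'
  have h1 : ∀ l, |x l| ^ (1 / w l) < c ^ (k : ℝ) := by
    intro l
    have h5 := Real.rpow_lt_rpow (abs_nonneg _) (h l)
      (one_div_pos.mpr (hw l))
    rwa [← Real.rpow_mul hc.le, mul_one_div, mul_div_assoc, div_self (hw l).ne',
      mul_one] at h5
  have h2 : wnorm w x < c ^ (k : ℝ) := by
    obtain ⟨l, hl⟩ := exists_eq_ciSup_of_finite (f := fun l => |x l| ^ (1 / w l))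
    rw [wnorm, ← hl]
    exact h1 l
  have hkpos : (0 : ℝ) < (k : ℝ) := by exact_mod_cast hk
  have h3 := Real.rpow_lt_rpow (wnorm_nonneg hk w x) h2 (one_div_pos.mpr hkpos)
  rwa [← Real.rpow_mul hc.le, mul_one_div, div_self hk', Real.rpow_one] at h3

/-- Let `α = min(i₁, …, i_m, j₁, …, j_n)`. If every entry of `h − I_d` is smaller in
absolute value than `((2^α − 1)/d) ε^{max(m,n)}`, and `δ_{i,j}(g) < ε/2`, then
`δ_{i,j}(h g) < ε`. -/
theorem deltaIJ_lt_of_perturb (m n : ℕ) (hm : 0 < m) (hn : 0 < n)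
    (wi : Fin m → ℝ) (wj : Fin n → ℝ)
    (hwi : ∀ k, 0 < wi k) (hwj : ∀ l, 0 < wj l)
    (hsi : ∑ k, wi k = 1) (hsj : ∑ l, wj l = 1)
    (ε : ℝ) (hε0 : 0 < ε) (hε1 : ε < 1)
    (h g : Matrix (Fin m ⊕ Fin n) (Fin m ⊕ Fin n) ℝ)
    (hhdet : h.det = 1) (hgdet : g.det = 1)
    (hsmall : ∀ a b : Fin m ⊕ Fin n,
      |h a b - (1 : Matrix (Fin m ⊕ Fin n) (Fin m ⊕ Fin n) ℝ) a b| <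
        (((2 : ℝ) ^ (min (⨅ k, wi k) (⨅ l, wj l)) - 1) / (m + n : ℝ)) *
          ε ^ (max m n))
    (hg : deltaIJ m n wi wj g < ε / 2) :
    deltaIJ m n wi wj (h * g) < ε := by
  classical
  have hιm : Nonempty (Fin m) := ⟨⟨0, hm⟩⟩
  have hιn : Nonempty (Fin n) := ⟨⟨0, hn⟩⟩
  have hιmn : Nonempty (Fin m ⊕ Fin n) := ⟨Sum.inl ⟨0, hm⟩⟩
  set α := min (⨅ k, wi k) (⨅ l, wj l) with hαdef
  have hα0 : 0 < α := by
    obtain ⟨k, hk⟩ := exists_eq_ciInf_of_finite (f := wi)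
    obtain ⟨l, hl⟩ := exists_eq_ciInf_of_finite (f := wj)
    exact lt_min (hk ▸ hwi k) (hl ▸ hwj l)
  have hαi : ∀ k, α ≤ wi k := fun k =>
    le_trans (min_le_left _ _) (ciInf_le (Set.Finite.bddBelow (Set.finite_range _)) k)
  have hαj : ∀ l, α ≤ wj l := fun l =>
    le_trans (min_le_right _ _) (ciInf_le (Set.Finite.bddBelow (Set.finite_range _)) l)
  have hwi1 : ∀ k, wi k ≤ 1 := by
    intro k; rw [← hsi]
    exact Finset.single_le_sum (fun k _ => (hwi k).le) (Finset.mem_univ k)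
  have hwj1 : ∀ l, wj l ≤ 1 := by
    intro l; rw [← hsj]
    exact Finset.single_le_sum (fun l _ => (hwj l).le) (Finset.mem_univ l)
  set T : Fin m ⊕ Fin n → ℝ :=
    Sum.elim (fun k => (m : ℝ) * wi k) (fun l => (n : ℝ) * wj l) with hT
  have hTα : ∀ a, α ≤ T a := by
    rintro (k | l)
    · calc α ≤ wi k := hαi k
        _ = 1 * wi k := (one_mul _).symm
        _ ≤ (m : ℝ) * wi k :=
          mul_le_mul_of_nonneg_right (by exact_mod_cast hm) (hwi k).le
    · calc α ≤ wj l := hαj l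
        _ = 1 * wj l := (one_mul _).symm
        _ ≤ (n : ℝ) * wj l :=
          mul_le_mul_of_nonneg_right (by exact_mod_cast hn) (hwj l).le
  have hT0 : ∀ a, 0 < T a := fun a => lt_of_lt_of_le hα0 (hTα a)
  have hTmax : ∀ a, T a ≤ ((max m n : ℕ) : ℝ) := by
    rintro (k | l)
    · calc (m : ℝ) * wi k ≤ (m : ℝ) * 1 :=
          mul_le_mul_of_nonneg_left (hwi1 k) (Nat.cast_nonneg m)
        _ = (m : ℝ) := mul_one _
        _ ≤ ((max m n : ℕ) : ℝ) := by exact_mod_cast le_max_left m n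
    · calc (n : ℝ) * wj l ≤ (n : ℝ) * 1 :=
          mul_le_mul_of_nonneg_left (hwj1 l) (Nat.cast_nonneg n)
        _ = (n : ℝ) := mul_one _
        _ ≤ ((max m n : ℕ) : ℝ) := by exact_mod_cast le_max_right m n
  -- extract a short vector for g
  rw [deltaIJ] at hg
  have hSbdd : BddBelow {r | ∃ v : Fin m ⊕ Fin n → ℤ, v ≠ 0 ∧
      r = wnormIJ m n wi wj (g.mulVec (fun x => (v x : ℝ)))} := by
    refine ⟨0, ?_⟩
    rintro r ⟨v, -, rfl⟩
    exact wnormIJ_nonneg m n hm wi wj _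
  have hSne : Set.Nonempty {r | ∃ v : Fin m ⊕ Fin n → ℤ, v ≠ 0 ∧
      r = wnormIJ m n wi wj (g.mulVec (fun x => (v x : ℝ)))} := by
    refine ⟨_, fun _ => 1, ?_, rfl⟩
    intro hcon
    have := congrFun hcon (Sum.inl ⟨0, hm⟩)
    simp at this
  obtain ⟨r, ⟨v, hv0, rfl⟩, hrε⟩ := (csInf_lt_iff hSbdd hSne).mp hg
  set u : Fin m ⊕ Fin n → ℝ := g.mulVec (fun x => (v x : ℝ)) with hu
  have hε2 : (0 : ℝ) < ε / 2 := by linarith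
  -- coordinatewise bounds on u
  have hucoord : ∀ a, |u a| < (ε / 2) ^ T a := by
    have h1 := (max_lt_iff.mp hrε).1
    have h2 := (max_lt_iff.mp hrε).2
    rintro (k | l)
    · exact block_lt hm wi _ hwi (ε / 2) hε2 h1 k
    · exact block_lt hn wj _ hwj (ε / 2) hε2 h2 l
  set c2 : ℝ := (2 : ℝ) ^ (-α) with hc2
  have hc2pos : (0 : ℝ) < c2 := Real.rpow_pos_of_pos two_pos _
  have hc2eq : ((2 : ℝ) ^ α)⁻¹ = c2 := (Real.rpow_neg (by norm_num) α).symm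
  have hub : ∀ b, |u b| ≤ c2 := by
    intro b
    refine le_trans (hucoord b).le ?_
    calc (ε / 2) ^ T b ≤ (2⁻¹ : ℝ) ^ T b :=
        Real.rpow_le_rpow (by positivity) (by linarith) (hT0 b).le
      _ ≤ (2⁻¹ : ℝ) ^ α :=
        Real.rpow_le_rpow_of_exponent_ge (by norm_num) (by norm_num) (hTα b)
      _ = c2 := by rw [Real.inv_rpow (by norm_num), hc2eq]
  set η : ℝ := (((2 : ℝ) ^ α - 1) / (m + n : ℝ)) * ε ^ (max m n) with hηdef
  have h2α1 : (1 : ℝ) ≤ (2 : ℝ) ^ α := by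
    have := Real.rpow_le_rpow_of_exponent_le (by norm_num : (1:ℝ) ≤ 2) hα0.le
    rwa [Real.rpow_zero] at this
  -- the key coordinatewise bound on h *ᵥ u
  have key : ∀ a, |(h.mulVec u) a| < ε ^ T a := by
    intro a
    have e1 : h.mulVec u a = u a + ((h - 1).mulVec u) a := by
      have e0 : (h - 1).mulVec u = h.mulVec u - u := by
        rw [Matrix.sub_mulVec, Matrix.one_mulVec]
      rw [e0]; simp
    have habs : |((h - 1).mulVec u) a| ≤ ∑ b, |h a b - (1 : Matrix _ _ ℝ) a b| * |u b| := by
      refine le_trans (le_of_eq (by rw [Matrix.mulVec, dotProduct])) ?_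
      refine (Finset.abs_sum_le_sum_abs _ _).trans (le_of_eq ?_)
      simp [abs_mul, Matrix.sub_apply]
    have hsum : ∑ b, |h a b - (1 : Matrix _ _ ℝ) a b| * |u b| <
        ∑ _b : Fin m ⊕ Fin n, η * c2 := by
      refine Finset.sum_lt_sum_of_nonempty Finset.univ_nonempty ?_
      intro b _
      calc |h a b - (1 : Matrix _ _ ℝ) a b| * |u b|
          ≤ |h a b - (1 : Matrix _ _ ℝ) a b| * c2 :=
            mul_le_mul_of_nonneg_left (hub b) (abs_nonneg _)
        _ < η * c2 := mul_lt_mul_of_pos_right (hsmall a b) hc2pos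
    have hcardsum : ∑ _b : Fin m ⊕ Fin n, η * c2 = ((m : ℝ) + n) * (η * c2) := by
      rw [Finset.sum_const, Finset.card_univ]
      simp [Fintype.card_sum, nsmul_eq_mul]
      try ring
    have hmn0 : ((m : ℝ) + n) ≠ 0 := by positivity
    have hd : ((m : ℝ) + n) * (η * c2) = ((2 : ℝ) ^ α - 1) * ε ^ (max m n) * c2 := by
      rw [hηdef]; field_simp; try ring
    -- rpow bounds
    have hA0 : (0 : ℝ) < ε ^ T a := Real.rpow_pos_of_pos hε0 _
    have P1 : (ε / 2) ^ T a ≤ ε ^ T a * c2 := by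
      have e2 : (ε / 2) ^ T a = ε ^ T a * (2⁻¹ : ℝ) ^ T a := by
        rw [div_eq_mul_inv, Real.mul_rpow hε0.le (by norm_num)]
      rw [e2]
      refine mul_le_mul_of_nonneg_left ?_ hA0.le
      calc (2⁻¹ : ℝ) ^ T a ≤ (2⁻¹ : ℝ) ^ α :=
          Real.rpow_le_rpow_of_exponent_ge (by norm_num) (by norm_num) (hTα a)
        _ = c2 := by rw [Real.inv_rpow (by norm_num), hc2eq]
    have P2 : ε ^ (max m n) ≤ ε ^ T a := by
      rw [← Real.rpow_natCast ε (max m n)]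
      exact Real.rpow_le_rpow_of_exponent_ge hε0 hε1.le (hTmax a)
    have P3 : c2 * (2 : ℝ) ^ α = 1 := by
      rw [← hc2eq]
      field_simp
    have P2' : ((2 : ℝ) ^ α - 1) * ε ^ (max m n) * c2 ≤
        ((2 : ℝ) ^ α - 1) * (ε ^ T a) * c2 := by
      refine mul_le_mul_of_nonneg_right ?_ hc2pos.le
      exact mul_le_mul_of_nonneg_left P2 (by linarith)
    calc |h.mulVec u a| = |u a + ((h - 1).mulVec u) a| := by rw [e1]
      _ ≤ |u a| + |((h - 1).mulVec u) a| := abs_add_le _ _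
      _ ≤ |u a| + ∑ b, |h a b - (1 : Matrix _ _ ℝ) a b| * |u b| := by linarith [habs]
      _ < (ε / 2) ^ T a + ((m : ℝ) + n) * (η * c2) := by
          have := hucoord a
          rw [hcardsum] at hsum
          linarith
      _ = (ε / 2) ^ T a + ((2 : ℝ) ^ α - 1) * ε ^ (max m n) * c2 := by rw [hd]
      _ ≤ ε ^ T a * c2 + ((2 : ℝ) ^ α - 1) * (ε ^ T a) * c2 := add_le_add P1 P2'
      _ = ε ^ T a * (c2 * (2 : ℝ) ^ α) := by ring
      _ = ε ^ T a := by rw [P3, mul_one]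
  -- conclude
  rw [deltaIJ]
  refine lt_of_le_of_lt (csInf_le ⟨0, ?_⟩ ⟨v, hv0, rfl⟩) ?_
  · rintro r ⟨w, -, rfl⟩
    exact wnormIJ_nonneg m n hm wi wj _
  · have e3 : (h * g).mulVec (fun x => (v x : ℝ)) = h.mulVec u := by
      rw [hu, Matrix.mulVec_mulVec]
    rw [e3, wnormIJ]
    refine max_lt ?_ ?_
    · refine block_gt hm wi _ hwi ε hε0 ?_
      intro k
      have := key (Sum.inl k)
      simpa [hT] using this
    · refine block_gt hn wj _ hwj ε hε0 ?_
      intro l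
      have := key (Sum.inr l)
      simpa [hT] using this
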